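/- arXiv:q-alg/9705006 — 2 statements merged into one kernel-verified Lean document; each statement's English description precedes it below -/
import Mathlib

section
/- The separated polynomial f_λ(y) = Σ_{k=λ₁}^{λ₂} (t^{−2}q)^{k−λ₁} [(t,q^{−λ₂₁};q)_{k−λ₁}/((q,t^{−1}q^{1−λ₂₁};q)_{k−λ₁})] y^k satisfies the second-order q-difference equation t(1−qy) f_λ(q²y) − t^{1/2}(t−qy) h₁ f_λ(qy) + (t²−qy) h₂ f_λ(y) = 0, where h₁ = t^{−1/2}q^{λ₁} + t^{1/2}q^{λ₂} and h₂ = q^{λ₁+λ₂}. -/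
open Finset

/-- The q-Pochhammer symbol `(a;q)_n`. -/
noncomputable def qPoch (a q : ℂ) (n : ℕ) : ℂ := ∏ j ∈ Finset.range n, (1 - a * q ^ j)

/-- Coefficient χ_k of the separated polynomial f_λ. -/
noncomputable def chi (q t : ℂ) (l1 l2 k : ℤ) : ℂ :=
  (t⁻¹ ^ 2 * q) ^ (k - l1).toNat *
    (qPoch t q (k - l1).toNat * qPoch (q ^ (-(l2 - l1))) q (k - l1).toNat) /
    (qPoch q q (k - l1).toNat * qPoch (t⁻¹ * q ^ (1 - (l2 - l1))) q (k - l1).toNat)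

/-- The separated polynomial f_λ(y) = Σ_{k=λ₁}^{λ₂} χ_k y^k. -/
noncomputable def fsep (q t : ℂ) (l1 l2 : ℤ) (y : ℂ) : ℂ :=
  ∑ k ∈ Finset.Icc l1 l2, chi q t l1 l2 k * y ^ k

lemma qPoch_succ (a q : ℂ) (n : ℕ) : qPoch a q (n + 1) = qPoch a q n * (1 - a * q ^ n) :=
  Finset.prod_range_succ _ _

/-- The separated polynomial f_λ satisfies the q-difference equation
t(1−qy) f_λ(q²y) − t^{1/2}(t−qy) h₁ f_λ(qy) + (t²−qy) h₂ f_λ(y) = 0, where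
h₁ = t^{−1/2}q^{λ₁} + t^{1/2}q^{λ₂}, h₂ = q^{λ₁+λ₂}, and s = t^{1/2}. -/
theorem separated_q_difference_equation (q t s : ℂ) (hq : q ≠ 0) (ht : t ≠ 0)
    (hs : s ^ 2 = t) (l1 l2 : ℤ) (hl : l1 ≤ l2)
    (hden : ∀ k : ℕ, qPoch q q k ≠ 0 ∧ qPoch (t⁻¹ * q ^ (1 - (l2 - l1))) q k ≠ 0)
    (y : ℂ) (hy : y ≠ 0) :
    t * (1 - q * y) * fsep q t l1 l2 (q ^ 2 * y)
      - s * (t - q * y) * (s⁻¹ * q ^ l1 + s * q ^ l2) * fsep q t l1 l2 (q * y)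
      + (t ^ 2 - q * y) * q ^ (l1 + l2) * fsep q t l1 l2 y = 0 := by
  obtain ⟨N, rfl⟩ : ∃ N : ℕ, l2 = l1 + N := ⟨(l2 - l1).toNat, by omega⟩
  have hs0 : s ≠ 0 := by
    intro h; apply ht; rw [← hs, h]; ring
  have hsi : s * s⁻¹ = 1 := mul_inv_cancel₀ hs0
  have hqN : (q : ℂ) ^ N ≠ 0 := pow_ne_zero _ hq
  -- normalize hden
  have hden' : ∀ k : ℕ, qPoch q q k ≠ 0 ∧ qPoch (t⁻¹ * (q * ((q : ℂ) ^ N)⁻¹)) q k ≠ 0 := by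
    intro k
    have h := hden k
    rwa [show (1 : ℤ) - (l1 + (N : ℤ) - l1) = 1 - (N : ℤ) by ring,
      zpow_sub₀ hq, zpow_one, zpow_natCast, div_eq_mul_inv] at h
  -- normal form of chi
  have hchi : ∀ n : ℕ, chi q t l1 (l1 + N) (l1 + n)
      = (t⁻¹ ^ 2 * q) ^ n * (qPoch t q n * qPoch (((q : ℂ) ^ N)⁻¹) q n)
        / (qPoch q q n * qPoch (t⁻¹ * (q * ((q : ℂ) ^ N)⁻¹)) q n) := by
    intro n
    have h1 : ((l1 + (n : ℤ)) - l1).toNat = n := by omega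
    rw [chi, h1, show l1 + (N : ℤ) - l1 = (N : ℤ) by ring,
      show ((q : ℂ) ^ (-(N : ℤ))) = ((q : ℂ) ^ N)⁻¹ by rw [zpow_neg, zpow_natCast],
      show ((q : ℂ) ^ ((1 : ℤ) - (N : ℤ))) = q * ((q : ℂ) ^ N)⁻¹ by
        rw [zpow_sub₀ hq, zpow_one, zpow_natCast, div_eq_mul_inv]]
  -- the two-term recurrence for the coefficients
  have hrec : ∀ n : ℕ,
      chi q t l1 (l1 + N) (l1 + ((n : ℤ) + 1)) * (t * (q ^ (n + 1) - 1) * (q ^ (n + 1) - t * q ^ N))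
        = q * chi q t l1 (l1 + N) (l1 + n) * ((t * q ^ n - 1) * (q ^ n - q ^ N)) := by
    intro n
    have e1 : (l1 + ((n : ℤ) + 1)) = l1 + ((n + 1 : ℕ) : ℤ) := by push_cast; ring
    obtain ⟨h3, h3'⟩ := mul_ne_zero_iff.mp (by rw [← qPoch_succ]; exact (hden' (n + 1)).1)
    obtain ⟨h4, h4'⟩ := mul_ne_zero_iff.mp (by rw [← qPoch_succ]; exact (hden' (n + 1)).2)
    have hratio : chi q t l1 (l1 + N) (l1 + ((n : ℤ) + 1))
        = chi q t l1 (l1 + N) (l1 + n)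
          * ((t⁻¹ ^ 2 * q) * ((1 - t * q ^ n) * (1 - ((q : ℂ) ^ N)⁻¹ * q ^ n))
            / ((1 - q * q ^ n) * (1 - (t⁻¹ * (q * ((q : ℂ) ^ N)⁻¹)) * q ^ n))) := by
      rw [e1, hchi (n + 1), hchi n, qPoch_succ, qPoch_succ, qPoch_succ, qPoch_succ,
        div_mul_div_comm]
      congr 1 <;> ring
    have hF : ((t⁻¹ ^ 2 * q) * ((1 - t * q ^ n) * (1 - ((q : ℂ) ^ N)⁻¹ * q ^ n))
          / ((1 - q * q ^ n) * (1 - (t⁻¹ * (q * ((q : ℂ) ^ N)⁻¹)) * q ^ n)))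
          * (t * (q ^ (n + 1) - 1) * (q ^ (n + 1) - t * q ^ N))
        = q * ((t * q ^ n - 1) * (q ^ n - q ^ N)) := by
      rw [div_mul_eq_mul_div, div_eq_iff (mul_ne_zero h3' h4')]
      field_simp
      ring
    rw [hratio]
    linear_combination (chi q t l1 (l1 + N) (l1 + n)) * hF
  -- rewrite fsep as y^l1 * (finite ℕ-indexed sum)
  have key : ∀ z : ℂ, z ≠ 0 → fsep q t l1 (l1 + N) z
      = z ^ (l1 : ℤ) * ∑ n ∈ Finset.range (N + 1), chi q t l1 (l1 + N) (l1 + n) * z ^ n := by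
    intro z hz
    rw [fsep, show Finset.Icc l1 (l1 + (N : ℤ))
        = Finset.map ⟨fun n : ℕ => l1 + n, (add_right_injective l1).comp Nat.cast_injective⟩
          (Finset.range (N + 1)) by
      ext k; simp only [Finset.mem_Icc, Finset.mem_map, Finset.mem_range,
        Function.Embedding.coeFn_mk]
      constructor
      · intro hk; exact ⟨(k - l1).toNat, by omega, by omega⟩
      · rintro ⟨n, hn, rfl⟩; constructor <;> [omega; omega],
      Finset.sum_map, Finset.mul_sum]
    refine Finset.sum_congr rfl fun n _ => ?_
    simp only [Function.Embedding.coeFn_mk]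
    rw [zpow_add₀ hz, zpow_natCast]
    ring
  -- the telescoping sum vanishes
  have main : (∑ n ∈ Finset.range (N + 1),
      (chi q t l1 (l1 + N) (l1 + n) * (t * (q ^ n - 1) * (q ^ n - t * q ^ N)) * y ^ n
        - q * chi q t l1 (l1 + N) (l1 + n) * ((t * q ^ n - 1) * (q ^ n - q ^ N)) * y ^ (n + 1)))
      = 0 := by
    rw [Finset.sum_sub_distrib, Finset.sum_range_succ' _ N, Finset.sum_range_succ]
    have hz0 : chi q t l1 (l1 + N) (l1 + ((0 : ℕ) : ℤ))
        * (t * (q ^ (0 : ℕ) - 1) * (q ^ (0 : ℕ) - t * q ^ N)) * y ^ (0 : ℕ) = 0 := by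
      simp
    have hzN : q * chi q t l1 (l1 + N) (l1 + ((N : ℕ) : ℤ))
        * ((t * q ^ N - 1) * (q ^ N - q ^ N)) * y ^ (N + 1) = 0 := by
      simp
    rw [hz0, hzN, add_zero, add_zero, sub_eq_zero]
    refine Finset.sum_congr rfl fun n _ => ?_
    have e1 : (l1 + ((n : ℕ) + 1 : ℕ) : ℤ) = l1 + ((n : ℤ) + 1) := by push_cast; ring
    rw [e1]
    linear_combination y ^ (n + 1) * hrec n
  -- assemble
  rw [key y hy, key (q * y) (mul_ne_zero hq hy),
    key (q ^ 2 * y) (mul_ne_zero (pow_ne_zero _ hq) hy),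
    show ((q : ℂ) ^ 2 * y) ^ (l1 : ℤ) = q ^ (l1 : ℤ) * q ^ (l1 : ℤ) * y ^ (l1 : ℤ) by
      rw [show (q : ℂ) ^ 2 * y = q * (q * y) by ring, mul_zpow, mul_zpow]; ring,
    show ((q : ℂ) * y) ^ (l1 : ℤ) = q ^ (l1 : ℤ) * y ^ (l1 : ℤ) from mul_zpow _ _ _,
    show (q : ℂ) ^ (l1 + (l1 + (N : ℤ))) = q ^ (l1 : ℤ) * (q ^ (l1 : ℤ) * q ^ N) by
      rw [zpow_add₀ hq, zpow_add₀ hq, zpow_natCast],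
    show (q : ℂ) ^ (l1 + (N : ℤ)) = q ^ (l1 : ℤ) * q ^ N by
      rw [zpow_add₀ hq, zpow_natCast]]
  set S2 := ∑ n ∈ Finset.range (N + 1), chi q t l1 (l1 + N) (l1 + n) * (q ^ 2 * y) ^ n with hS2
  set S1 := ∑ n ∈ Finset.range (N + 1), chi q t l1 (l1 + N) (l1 + n) * (q * y) ^ n with hS1
  set S0 := ∑ n ∈ Finset.range (N + 1), chi q t l1 (l1 + N) (l1 + n) * y ^ n with hS0
  set M := ∑ n ∈ Finset.range (N + 1),
      (chi q t l1 (l1 + N) (l1 + n) * (t * (q ^ n - 1) * (q ^ n - t * q ^ N)) * y ^ n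
        - q * chi q t l1 (l1 + N) (l1 + n) * ((t * q ^ n - 1) * (q ^ n - q ^ N)) * y ^ (n + 1))
    with hM
  have hsum : t * (1 - q * y) * S2 * (q ^ (l1 : ℤ) * q ^ (l1 : ℤ))
      - (t - q * y) * (q ^ (l1 : ℤ) + t * (q ^ (l1 : ℤ) * q ^ N)) * S1 * q ^ (l1 : ℤ)
      + (t ^ 2 - q * y) * (q ^ (l1 : ℤ) * (q ^ (l1 : ℤ) * q ^ N)) * S0
      = q ^ (l1 : ℤ) * q ^ (l1 : ℤ) * M := by
    rw [hS2, hS1, hS0, hM]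
    simp only [Finset.mul_sum, Finset.sum_mul]
    rw [← Finset.sum_sub_distrib, ← Finset.sum_add_distrib]
    refine Finset.sum_congr rfl fun n _ => ?_
    ring
  linear_combination (y ^ (l1 : ℤ)) * hsum
    + (q ^ (l1 : ℤ) * q ^ (l1 : ℤ) * y ^ (l1 : ℤ)) * main
    - ((t - q * y) * q ^ (l1 : ℤ) * q ^ (l1 : ℤ) * y ^ (l1 : ℤ) * S1) * hsi
    - ((t - q * y) * q ^ (l1 : ℤ) * q ^ (l1 : ℤ) * q ^ N * y ^ (l1 : ℤ) * S1) * hs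
end

section
/- For the operators Q₁ = −[x₂(tξ−x₁)/(tξ(x₁−x₂))]T_{q,x₁}^{−1} + [x₁(tξ−x₂)/(tξ(x₁−x₂))]T_{q,x₂}^{−1} and Q₂ = −[(tξ−x₁)/(x₁−x₂)]T_{q,x₁}^{−1} + [(tξ−x₂)/(x₁−x₂)]T_{q,x₂}^{−1}, the Laurent polynomials r_ν = (x₁x₂)^{ν₂}(tξx₁^{−1}, tξx₂^{−1}; q)_{ν₂₁} satisfy Q₁ r_ν = q^{−ν₁} r_ν and Q₂ r_ν = q^{−ν₂} r_ν. -/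
open Finset

/-- The basis r_ν(x₁,x₂) = (x₁x₂)^{ν₂}(tξx₁⁻¹, tξx₂⁻¹; q)_{ν₂₁}. -/
noncomputable def rbasis (q t ξ : ℂ) (n1 n2 : ℤ) (x1 x2 : ℂ) : ℂ :=
  (x1 * x2) ^ n2 * qPoch (t * ξ * x1⁻¹) q (n2 - n1).toNat *
    qPoch (t * ξ * x2⁻¹) q (n2 - n1).toNat

lemma qPoch_shift (c q : ℂ) (m : ℕ) :
    qPoch (c * q) q m * (1 - c) = qPoch c q m * (1 - c * q ^ m) := by
  induction m with
  | zero => simp [qPoch]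
  | succ n ih =>
    simp only [qPoch, Finset.prod_range_succ] at *
    linear_combination (1 - c * q ^ (n + 1)) * ih

lemma qPoch_shift' (a x q : ℂ) (hx : x ≠ 0) (m : ℕ) :
    qPoch (a * x⁻¹ * q) q m * (x - a) = qPoch (a * x⁻¹) q m * (x - a * q ^ m) := by
  have h := qPoch_shift (a * x⁻¹) q m
  have hx1 : x * x⁻¹ = 1 := mul_inv_cancel₀ hx
  linear_combination x * h + (a * qPoch (a * x⁻¹ * q) q m - a * q ^ m * qPoch (a * x⁻¹) q m) * hx1

/-- r_ν are eigenfunctions of the operators Q₁ and Q₂: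
Q₁ r_ν = q^{−ν₁} r_ν, Q₂ r_ν = q^{−ν₂} r_ν, where
Q₁ = −[x₂(tξ−x₁)/(tξ(x₁−x₂))]T_{q,x₁}⁻¹ + [x₁(tξ−x₂)/(tξ(x₁−x₂))]T_{q,x₂}⁻¹ and
Q₂ = −[(tξ−x₁)/(x₁−x₂)]T_{q,x₁}⁻¹ + [(tξ−x₂)/(x₁−x₂)]T_{q,x₂}⁻¹, with
T_{q,x}⁻¹ f(x) = f(q⁻¹x). -/
theorem rbasis_eigenfunctions (q t ξ : ℂ) (hq : q ≠ 0) (ht : t ≠ 0) (hξ : ξ ≠ 0)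
    (n1 n2 : ℤ) (h : n1 ≤ n2) (x1 x2 : ℂ) (h1 : x1 ≠ 0) (h2 : x2 ≠ 0)
    (hne : x1 ≠ x2) :
    (-(x2 * (t * ξ - x1) / (t * ξ * (x1 - x2))) * rbasis q t ξ n1 n2 (q⁻¹ * x1) x2
        + x1 * (t * ξ - x2) / (t * ξ * (x1 - x2)) * rbasis q t ξ n1 n2 x1 (q⁻¹ * x2)
      = q ^ (-n1) * rbasis q t ξ n1 n2 x1 x2)
    ∧ (-((t * ξ - x1) / (x1 - x2)) * rbasis q t ξ n1 n2 (q⁻¹ * x1) x2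
        + (t * ξ - x2) / (x1 - x2) * rbasis q t ξ n1 n2 x1 (q⁻¹ * x2)
      = q ^ (-n2) * rbasis q t ξ n1 n2 x1 x2) := by
  set m : ℕ := (n2 - n1).toNat with hm
  have hx12 : x1 - x2 ≠ 0 := sub_ne_zero.mpr hne
  have hi1 : t * ξ * (q⁻¹ * x1)⁻¹ = t * ξ * x1⁻¹ * q := by field_simp
  have hi2 : t * ξ * (q⁻¹ * x2)⁻¹ = t * ξ * x2⁻¹ * q := by field_simp
  have hz1 : (q⁻¹ * x1 * x2) ^ n2 = q ^ (-n2) * (x1 * x2) ^ n2 := by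
    rw [show q⁻¹ * x1 * x2 = q⁻¹ * (x1 * x2) by ring, mul_zpow, inv_zpow, ← zpow_neg]
  have hz2 : (x1 * (q⁻¹ * x2)) ^ n2 = q ^ (-n2) * (x1 * x2) ^ n2 := by
    rw [show x1 * (q⁻¹ * x2) = q⁻¹ * (x1 * x2) by ring, mul_zpow, inv_zpow, ← zpow_neg]
  have e1 : rbasis q t ξ n1 n2 (q⁻¹ * x1) x2
      = q ^ (-n2) * (x1 * x2) ^ n2 * qPoch (t * ξ * x1⁻¹ * q) q m * qPoch (t * ξ * x2⁻¹) q m := by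
    rw [rbasis, hi1, hz1, ← hm]
  have e2 : rbasis q t ξ n1 n2 x1 (q⁻¹ * x2)
      = q ^ (-n2) * (x1 * x2) ^ n2 * qPoch (t * ξ * x1⁻¹) q m * qPoch (t * ξ * x2⁻¹ * q) q m := by
    rw [rbasis, hi2, hz2, ← hm]
  have e0 : rbasis q t ξ n1 n2 x1 x2
      = (x1 * x2) ^ n2 * qPoch (t * ξ * x1⁻¹) q m * qPoch (t * ξ * x2⁻¹) q m := by
    rw [rbasis, ← hm]
  have hq1 : (q : ℂ) ^ (-n1) = q ^ m * q ^ (-n2) := by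
    rw [← zpow_natCast, ← zpow_add₀ hq]
    congr 1
    omega
  have hA := qPoch_shift' (t * ξ) x1 q h1 m
  have hB := qPoch_shift' (t * ξ) x2 q h2 m
  set A := qPoch (t * ξ * x1⁻¹ * q) q m
  set B := qPoch (t * ξ * x2⁻¹ * q) q m
  set P1 := qPoch (t * ξ * x1⁻¹) q m
  set P2 := qPoch (t * ξ * x2⁻¹) q m
  set C := (x1 * x2) ^ n2
  set w := (q : ℂ) ^ (-n2)
  rw [e0, e1, e2, hq1]
  constructor
  · rw [← neg_div, div_mul_eq_mul_div, div_mul_eq_mul_div, ← add_div,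
      div_eq_iff (mul_ne_zero (mul_ne_zero ht hξ) hx12)]
    linear_combination (x2 * w * C * P2) * hA - (x1 * w * C * P1) * hB
  · rw [← neg_div, div_mul_eq_mul_div, div_mul_eq_mul_div, ← add_div,
      div_eq_iff hx12]
    linear_combination (w * C * P2) * hA - (w * C * P1) * hB
end
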